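/- If f = f_m ∘ f_{m−1} ∘ ⋯ ∘ f_1 is a composition of fundamental translations of B_n with f(a) = b_n and f(a) ≠ f(0), then m ≥ n − 1. In particular, any unary polynomial of B_n generated by fundamental translations witnessing a Maltsev chain step from a to 0 producing b_n has nesting depth at least n − 1, so the Maltsev depth of B_n is at least n − 1. -/

import Mathlib

/-- The three-element set `M = {0, D, ∂D}`. -/
inductive Mc : Type
  | z : Mc
  | D : Mc
  | pD : Mc
deriving DecidableEq

/-- The fixed-point-free involution `∂` exchanging `D` and `∂D`
(its value on `0` is irrelevant to the operations below). -/
def pd : Mc → Mc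
  | Mc.D => Mc.pD
  | Mc.pD => Mc.D
  | Mc.z => Mc.z

/-- Height-1 meet on `M`: `x ∧ y = x` if `x = y`, else `0`. -/
def mmt (x y : Mc) : Mc := if x = y then x else Mc.z

/-- `J(x,y,w) = x` if `x = y`; `x ∧ w` if `x = ∂y`; `0` otherwise. -/
def mJ (x y w : Mc) : Mc := if x = y then x else if x = pd y then mmt x w else Mc.z

/-- `J'(x,y,w) = x ∧ w` if `x = y`; `x` if `x = ∂y`; `0` otherwise. -/
def mJ' (x y w : Mc) : Mc := if x = y then mmt x w else if x = pd y then x else Mc.z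

/-- Pointwise meet on `M^n`. -/
def vmt {n : ℕ} (x y : Fin n → Mc) : Fin n → Mc := fun l => mmt (x l) (y l)

/-- Pointwise `J` on `M^n`. -/
def vJ {n : ℕ} (x y w : Fin n → Mc) : Fin n → Mc := fun l => mJ (x l) (y l) (w l)

/-- Pointwise `J'` on `M^n`. -/
def vJ' {n : ℕ} (x y w : Fin n → Mc) : Fin n → Mc := fun l => mJ' (x l) (y l) (w l)

/-- The zero tuple in `M^n`. -/
def vz (n : ℕ) : Fin n → Mc := fun _ => Mc.z

/-- `b_i`: `D` in (1-indexed) coordinates `1..i`, `0` afterwards. -/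
def vb (n i : ℕ) : Fin n → Mc := fun l => if l.val < i then Mc.D else Mc.z

/-- `d_i`: `D` in coordinates `1..i-1`, `∂D` in coordinate `i`, `0` afterwards. -/
def vd (n i : ℕ) : Fin n → Mc := fun l =>
  if l.val + 1 < i then Mc.D else if l.val + 1 = i then Mc.pD else Mc.z

/-- `c_i`: `0` in coordinate `1`, `D` in coordinates `2..i`, `0` afterwards. -/
def vc (n i : ℕ) : Fin n → Mc := fun l =>
  if l.val = 0 then Mc.z else if l.val < i then Mc.D else Mc.z

/-- `a = b_1 = (D,0,…,0)`. -/
def va (n : ℕ) : Fin n → Mc := vb n 1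

/-- The subuniverse `B_n` of `M^n`, generated by `{a} ∪ {b_i, d_i : 2 ≤ i ≤ n}`
under the pointwise operations `∧`, `J`, `J'`. -/
inductive Bn (n : ℕ) : (Fin n → Mc) → Prop
  | gen_a : Bn n (va n)
  | gen_b (i : ℕ) (h2 : 2 ≤ i) (hn : i ≤ n) : Bn n (vb n i)
  | gen_d (i : ℕ) (h2 : 2 ≤ i) (hn : i ≤ n) : Bn n (vd n i)
  | cmt {x y} : Bn n x → Bn n y → Bn n (vmt x y)
  | cJ {x y w} : Bn n x → Bn n y → Bn n w → Bn n (vJ x y w)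
  | cJ' {x y w} : Bn n x → Bn n y → Bn n w → Bn n (vJ' x y w)

/-- The congruence of the algebra with universe `C` (a subuniverse of `M^n`) generated by the
pair `(a, b)`: the smallest equivalence relation on `C` containing `(a,b)` and compatible with
the operations `∧`, `J`, `J'`. -/
inductive CgC {n : ℕ} (C : (Fin n → Mc) → Prop) (a b : Fin n → Mc) :
    (Fin n → Mc) → (Fin n → Mc) → Prop
  | base : CgC C a b a b
  | refl {x} (hx : C x) : CgC C a b x x
  | symm {x y} : CgC C a b x y → CgC C a b y x
  | trans {x y z} : CgC C a b x y → CgC C a b y z → CgC C a b x z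
  | cmt {x x' y y'} : CgC C a b x x' → CgC C a b y y' → CgC C a b (vmt x y) (vmt x' y')
  | cJ {x x' y y' w w'} : CgC C a b x x' → CgC C a b y y' → CgC C a b w w' →
      CgC C a b (vJ x y w) (vJ x' y' w')
  | cJ' {x x' y y' w w'} : CgC C a b x x' → CgC C a b y y' → CgC C a b w w' →
      CgC C a b (vJ' x y w) (vJ' x' y' w')

/-- Unary polynomials of the algebra with universe `C`: functions built by composition from
the operations `∧`, `J`, `J'`, constants from `C`, and the identity. -/
inductive PolyC {n : ℕ} (C : (Fin n → Mc) → Prop) : ((Fin n → Mc) → (Fin n → Mc)) → Prop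
  | id : PolyC C id
  | const {c} (h : C c) : PolyC C (fun _ => c)
  | pmt {f g} : PolyC C f → PolyC C g → PolyC C (fun x => vmt (f x) (g x))
  | pJ {f g h} : PolyC C f → PolyC C g → PolyC C h → PolyC C (fun x => vJ (f x) (g x) (h x))
  | pJ' {f g h} : PolyC C f → PolyC C g → PolyC C h → PolyC C (fun x => vJ' (f x) (g x) (h x))

/-- Fundamental translations of the algebra with universe `C`: unary polynomials obtained from
one of the operations `∧`, `J`, `J'` by fixing all but one argument at constants from `C`. -/
inductive FT {n : ℕ} (C : (Fin n → Mc) → Prop) : ((Fin n → Mc) → (Fin n → Mc)) → Prop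
  | mtL {c} (h : C c) : FT C (fun x => vmt x c)
  | mtR {c} (h : C c) : FT C (fun x => vmt c x)
  | J1 {c d} (hc : C c) (hd : C d) : FT C (fun x => vJ x c d)
  | J2 {c d} (hc : C c) (hd : C d) : FT C (fun x => vJ c x d)
  | J3 {c d} (hc : C c) (hd : C d) : FT C (fun x => vJ c d x)
  | J'1 {c d} (hc : C c) (hd : C d) : FT C (fun x => vJ' x c d)
  | J'2 {c d} (hc : C c) (hd : C d) : FT C (fun x => vJ' c x d)
  | J'3 {c d} (hc : C c) (hd : C d) : FT C (fun x => vJ' c d x)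

/-- The support of a tuple: the set of coordinates where it is nonzero. -/
def suppF {n : ℕ} (x : Fin n → Mc) : Finset (Fin n) :=
  Finset.univ.filter (fun l => x l ≠ Mc.z)


instance : Fintype Mc := ⟨{Mc.z, Mc.D, Mc.pD}, by intro x; cases x <;> simp⟩

lemma mmt_ne1 : ∀ x c : Mc, mmt x c ≠ Mc.z → x ≠ Mc.z := by decide
lemma mmt_ne2 : ∀ c x : Mc, mmt c x ≠ Mc.z → x ≠ Mc.z := by decide
lemma mJ_ne1 : ∀ x c d : Mc, mJ x c d ≠ Mc.z → x ≠ Mc.z := by decide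
lemma mJ_ne2 : ∀ c x d : Mc, mJ c x d ≠ Mc.z → x ≠ Mc.z := by decide
lemma mJ'_ne1 : ∀ x c d : Mc, mJ' x c d ≠ Mc.z → x ≠ Mc.z := by decide
lemma mJ'_ne2 : ∀ c x d : Mc, mJ' c x d ≠ Mc.z → x ≠ Mc.z := by decide
lemma mJ'_ne3 : ∀ c d x : Mc, mJ' c d x ≠ Mc.z → x ≠ Mc.z ∨ (c = pd d ∧ c ≠ Mc.z) := by decide
lemma mJ_DD : ∀ x : Mc, mJ Mc.D Mc.D x = Mc.D := by decide
lemma mJ'_DDD : mJ' Mc.D Mc.D Mc.D = Mc.D := by decide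
lemma mmt_DD : mmt Mc.D Mc.D = Mc.D := by decide
lemma pd_cases : ∀ a b : Mc, a = pd b → a ≠ Mc.z → (a = Mc.pD ∨ b = Mc.pD) ∧ b ≠ Mc.z := by decide
lemma mmt_pD : ∀ a b : Mc, mmt a b = Mc.pD → a = Mc.pD := by decide
lemma mJ_pD : ∀ a b c : Mc, mJ a b c = Mc.pD → a = Mc.pD := by decide
lemma mJ'_pD : ∀ a b c : Mc, mJ' a b c = Mc.pD → a = Mc.pD := by decide
lemma mmt_z : ∀ b : Mc, mmt Mc.z b = Mc.z := by decide
lemma mJ_z : ∀ b c : Mc, mJ Mc.z b c = Mc.z := by decide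
lemma mJ'_z : ∀ b c : Mc, mJ' Mc.z b c = Mc.z := by decide

/-- Every element of `B_n` has `D` in the first coordinate. -/
lemma bn_first {n : ℕ} {x : Fin n → Mc} (h : Bn n x) :
    ∀ l : Fin n, l.val = 0 → x l = Mc.D := by
  induction h with
  | gen_a => intro l hl; simp [va, vb, hl]
  | gen_b i h2 hn => intro l hl; simp only [vb, hl]; rw [if_pos (by omega)]
  | gen_d i h2 hn => intro l hl; simp only [vd, hl]; rw [if_pos (by omega)]
  | cmt hx hy ihx ihy =>
      intro l hl; show mmt _ _ = _; rw [ihx l hl, ihy l hl]; exact mmt_DD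
  | cJ hx hy hw ihx ihy ihw =>
      intro l hl; show mJ _ _ _ = _; rw [ihx l hl, ihy l hl]; exact mJ_DD _
  | cJ' hx hy hw ihx ihy ihw =>
      intro l hl; show mJ' _ _ _ = _; rw [ihx l hl, ihy l hl, ihw l hl]; exact mJ'_DDD

/-- Every element of `B_n` is zero after any coordinate with value `∂D`. -/
lemma bn_pd {n : ℕ} {x : Fin n → Mc} (h : Bn n x) :
    ∀ l l' : Fin n, x l = Mc.pD → l.val < l'.val → x l' = Mc.z := by
  induction h with
  | gen_a =>
      intro l l' hp _; exfalso; revert hp; simp only [va, vb]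
      split <;> simp
  | gen_b i h2 hn =>
      intro l l' hp _; exfalso; revert hp; simp only [vb]
      split <;> simp
  | gen_d i h2 hn =>
      intro l l' hp hlt
      simp only [vd] at hp ⊢
      have hli : l.val + 1 = i := by
        rcases Nat.lt_trichotomy (l.val + 1) i with h1 | h1 | h1
        · rw [if_pos h1] at hp; exact Mc.noConfusion hp
        · exact h1
        · rw [if_neg (by omega), if_neg (by omega)] at hp; exact Mc.noConfusion hp
      rw [if_neg (by omega), if_neg (by omega)]
  | cmt hx hy ihx ihy =>
      intro l l' hp hlt
      simp only [vmt] at hp ⊢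
      rw [ihx l l' (mmt_pD _ _ hp) hlt]; exact mmt_z _
  | cJ hx hy hw ihx ihy ihw =>
      intro l l' hp hlt
      simp only [vJ] at hp ⊢
      rw [ihx l l' (mJ_pD _ _ _ hp) hlt]; exact mJ_z _ _
  | cJ' hx hy hw ihx ihy ihw =>
      intro l l' hp hlt
      simp only [vJ'] at hp ⊢
      rw [ihx l l' (mJ'_pD _ _ _ hp) hlt]; exact mJ'_z _ _

/-- Uniqueness of the "∂" coordinate of a pair from `B_n`. -/
lemma pd_unique_aux {n : ℕ} {c d : Fin n → Mc} (hc : Bn n c) (hd : Bn n d)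
    {l l' : Fin n} (h : c l = pd (d l) ∧ c l ≠ Mc.z)
    (h' : c l' = pd (d l') ∧ c l' ≠ Mc.z) (hlt : l.val < l'.val) : False := by
  rcases (pd_cases _ _ h.1 h.2).1 with hpc | hpd
  · exact h'.2 (bn_pd hc l l' hpc hlt)
  · exact (pd_cases _ _ h'.1 h'.2).2 (bn_pd hd l l' hpd hlt)

lemma pd_unique {n : ℕ} {c d : Fin n → Mc} (hc : Bn n c) (hd : Bn n d)
    {l l' : Fin n} (h : c l = pd (d l) ∧ c l ≠ Mc.z)
    (h' : c l' = pd (d l') ∧ c l' ≠ Mc.z) : l = l' := by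
  rcases Nat.lt_trichotomy l.val l'.val with hlt | heq | hgt
  · exact absurd (pd_unique_aux hc hd h h' hlt) not_false
  · exact Fin.ext heq
  · exact absurd (pd_unique_aux hc hd h' h hgt) not_false

/-- Fundamental translations act pointwise, hence preserve coordinatewise agreement. -/
lemma ft_agree {n : ℕ} {C : (Fin n → Mc) → Prop} {g : (Fin n → Mc) → (Fin n → Mc)}
    (hg : FT C g) {r s : Fin n → Mc} {l : Fin n} (h : r l = s l) : g r l = g s l := by
  cases hg <;> simp [vmt, vJ, vJ', h]

lemma fold_agree {n : ℕ} {C : (Fin n → Mc) → Prop} :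
    ∀ (L : List ((Fin n → Mc) → (Fin n → Mc))), (∀ g ∈ L, FT C g) →
      ∀ (r s : Fin n → Mc) (l : Fin n), r l = s l →
        (L.foldr (· ∘ ·) id) r l = (L.foldr (· ∘ ·) id) s l := by
  intro L
  induction L with
  | nil => intro _ r s l h; exact h
  | cons g L' ih =>
      intro hL r s l h
      have h' := ih (fun g hg => hL g (List.mem_cons_of_mem _ hg)) r s l h
      exact ft_agree (hL g List.mem_cons_self) h'

lemma card_subset {n : ℕ} {A B : Finset (Fin n)} (h : A ⊆ B) : A.card ≤ B.card + 1 :=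
  le_trans (Finset.card_le_card h) (Nat.le_succ _)

lemma card_insert {n : ℕ} {A B : Finset (Fin n)} {l0 : Fin n} (h : A ⊆ insert l0 B) :
    A.card ≤ B.card + 1 :=
  le_trans (Finset.card_le_card h) (Finset.card_insert_le _ _)

lemma mem_suppF {n : ℕ} {x : Fin n → Mc} {l : Fin n} : l ∈ suppF x ↔ x l ≠ Mc.z := by
  simp [suppF]

/-- Key step: a fundamental translation separating a pair that differs only in the first
coordinate increases the support by at most one. -/
lemma step_card {n : ℕ} {g : (Fin n → Mc) → (Fin n → Mc)} {r s : Fin n → Mc}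
    (hg : FT (Bn n) g) (hrs : ∀ l : Fin n, l.val ≠ 0 → r l = s l)
    (hne : g r ≠ g s) : (suppF (g r)).card ≤ (suppF r).card + 1 := by
  cases hg with
  | mtL hc => exact card_subset (fun l hl => mem_suppF.2 (mmt_ne1 _ _ (mem_suppF.1 hl)))
  | mtR hc => exact card_subset (fun l hl => mem_suppF.2 (mmt_ne2 _ _ (mem_suppF.1 hl)))
  | J1 hc hd => exact card_subset (fun l hl => mem_suppF.2 (mJ_ne1 _ _ _ (mem_suppF.1 hl)))
  | J2 hc hd => exact card_subset (fun l hl => mem_suppF.2 (mJ_ne2 _ _ _ (mem_suppF.1 hl)))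
  | J'1 hc hd => exact card_subset (fun l hl => mem_suppF.2 (mJ'_ne1 _ _ _ (mem_suppF.1 hl)))
  | J'2 hc hd => exact card_subset (fun l hl => mem_suppF.2 (mJ'_ne2 _ _ _ (mem_suppF.1 hl)))
  | @J3 c d hc hd =>
      exfalso
      obtain ⟨l, hl⟩ := Function.ne_iff.mp hne
      have hrl : r l ≠ s l := fun e => hl (by show mJ _ _ _ = mJ _ _ _; rw [e])
      have hl0 : l.val = 0 := by by_contra hcon; exact hrl (hrs l hcon)
      have hcD := bn_first hc l hl0
      have hdD := bn_first hd l hl0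
      apply hl
      show mJ (c l) (d l) (r l) = mJ (c l) (d l) (s l)
      rw [hcD, hdD, mJ_DD, mJ_DD]
  | @J'3 c d hc hd =>
      by_cases hE : ∃ l0 : Fin n, c l0 = pd (d l0) ∧ c l0 ≠ Mc.z
      · obtain ⟨l0, hl0⟩ := hE
        apply card_insert (B := suppF r) (l0 := l0)
        intro l hl
        have := mJ'_ne3 (c l) (d l) (r l) (mem_suppF.1 hl)
        rcases this with hr | hbad
        · exact Finset.mem_insert_of_mem (mem_suppF.2 hr)
        · exact Finset.mem_insert.2 (Or.inl (pd_unique hc hd hbad hl0))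
      · apply card_subset
        intro l hl
        rcases mJ'_ne3 (c l) (d l) (r l) (mem_suppF.1 hl) with hr | hbad
        · exact mem_suppF.2 hr
        · exact absurd ⟨l, hbad⟩ hE

lemma chain_card {n : ℕ} :
    ∀ (L : List ((Fin n → Mc) → (Fin n → Mc))), (∀ g ∈ L, FT (Bn n) g) →
      ∀ (r s : Fin n → Mc), (∀ l : Fin n, l.val ≠ 0 → r l = s l) →
        (L.foldr (· ∘ ·) id) r ≠ (L.foldr (· ∘ ·) id) s →
        (suppF ((L.foldr (· ∘ ·) id) r)).card ≤ (suppF r).card + L.length := by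
  intro L
  induction L with
  | nil => intro _ r s _ _; simp
  | cons g L' ih =>
      intro hL r s hrs hne
      have hL' : ∀ g ∈ L', FT (Bn n) g := fun g hg => hL g (List.mem_cons_of_mem _ hg)
      set F' := L'.foldr (· ∘ ·) id with hF'
      have hfold : (g :: L').foldr (· ∘ ·) id = g ∘ F' := rfl
      rw [hfold] at hne ⊢
      have hne' : F' r ≠ F' s := fun e => hne (by show g (F' r) = g (F' s); rw [e])
      have hagree : ∀ l : Fin n, l.val ≠ 0 → F' r l = F' s l := fun l hl =>
        fold_agree L' hL' r s l (hrs l hl)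
      have hstep := step_card (hL g List.mem_cons_self) hagree hne
      calc (suppF (g (F' r))).card ≤ (suppF (F' r)).card + 1 := hstep
        _ ≤ (suppF r).card + L'.length + 1 := by
            exact Nat.add_le_add_right (ih hL' r s hrs hne') 1
        _ = (suppF r).card + (g :: L').length := by simp [Nat.add_assoc]

/-- If `f = f_m ∘ ⋯ ∘ f_1` is a composition of fundamental translations of `B_n` with
`f(a) = b_n` and `f(a) ≠ f(0)`, then `m ≥ n − 1`; so the Maltsev depth of `B_n` is at
least `n − 1`. -/
theorem maltsev_depth_lower_bound {n : ℕ} (hn : 2 ≤ n)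
    (L : List ((Fin n → Mc) → (Fin n → Mc)))
    (hL : ∀ g ∈ L, FT (Bn n) g)
    (f : (Fin n → Mc) → (Fin n → Mc))
    (hf : f = L.foldr (· ∘ ·) id)
    (ha : f (va n) = vb n n)
    (hne : f (va n) ≠ f (vz n)) :
    n - 1 ≤ L.length := by
  subst hf
  have hrs : ∀ l : Fin n, l.val ≠ 0 → va n l = vz n l := by
    intro l hl
    simp only [va, vb, vz]
    rw [if_neg (by omega)]
  have hmain := chain_card L hL (va n) (vz n) hrs hne
  have hsa : (suppF (va n)).card = 1 := by
    have : suppF (va n) = {(⟨0, by omega⟩ : Fin n)} := by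
      ext l
      simp only [mem_suppF, Finset.mem_singleton, va, vb]
      constructor
      · intro h
        have h1 : l.val < 1 := by
          by_contra hcon
          exact h (by rw [if_neg hcon])
        have h0 : l.val = 0 := by omega
        exact Fin.ext h0
      · intro h; subst h; simp
    rw [this, Finset.card_singleton]
  have hsb : (suppF (vb n n)).card = n := by
    have : suppF (vb n n) = Finset.univ := by
      ext l
      simp only [mem_suppF, Finset.mem_univ, iff_true, vb]
      rw [if_pos l.isLt]
      simp
    rw [this, Finset.card_univ, Fintype.card_fin]
  rw [ha, hsb, hsa] at hmain
  omega
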